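/- arXiv:2007.08303 — 4 statements merged into one kernel-verified Lean document; each statement's English description precedes it below -/
import Mathlib

section
/- Let n = 3t+1 and let each party i assign real-valued timestamps τ_i(r), τ_i(l) to two requests r and l, with at most t corrupt parties. Let τ₁ be the median of the n timestamps for r. Suppose (1) at least t+1 parties have τ_i(r) ≤ τ₁, (2) at most t parties have τ_i(l) < τ₁, and (3) there exists τ₂ with at least t+1 parties having τ_i(l) < τ₂ and at most t parties having τ_i(r) < τ₂. Then we reach a contradiction: conditions (1)–(3) cannot hold simultaneously. -/
open Finset

/-- Core counting argument of Clocked-Wendy safety: conditions (1)-(3) on timestamps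
around the median τ₁ of r's timestamps cannot hold simultaneously. -/
theorem clocked_wendy_safety_counting (t : ℕ)
    (τr τl : Fin (3 * t + 1) → ℝ) (C : Finset (Fin (3 * t + 1)))
    (hC : C.card ≤ t) (τ₁ : ℝ)
    (h1 : t + 1 ≤ (univ.filter fun i => τr i ≤ τ₁).card)
    (h2 : (univ.filter fun i => τl i < τ₁).card ≤ t)
    (h3 : ∃ τ₂ : ℝ, t + 1 ≤ (univ.filter fun i => τl i < τ₂).card ∧
      (univ.filter fun i => τr i < τ₂).card ≤ t) :
    False := by
  obtain ⟨τ₂, h3a, h3b⟩ := h3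
  have hlt : τ₁ < τ₂ := by
    by_contra h
    push_neg at h
    have hsub : (univ.filter fun i => τl i < τ₂) ⊆ (univ.filter fun i => τl i < τ₁) := by
      intro i hi
      simp only [mem_filter] at *
      exact ⟨hi.1, lt_of_lt_of_le hi.2 h⟩
    have := (card_le_card hsub).trans h2
    omega
  have hsub : (univ.filter fun i => τr i ≤ τ₁) ⊆ (univ.filter fun i => τr i < τ₂) := by
    intro i hi
    simp only [mem_filter] at *
    exact ⟨hi.1, lt_of_le_of_lt hi.2 hlt⟩
  have := (h1.trans (card_le_card hsub)).trans h3b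
  omega
end

section
/- Timed relative fairness is acyclic: if requests are each assigned, per honest party, a real arrival time, and we define r ≺ r' iff there exists a threshold τ such that every honest party's time for r is less than τ and every honest party's time for r' is at least τ, then ≺ is a strict partial order; in particular there is no cycle r_1 ≺ r_2 ≺ … ≺ r_k ≺ r_1. -/
/-- Timed relative fairness is a strict partial order (irreflexive and transitive),
hence admits no cycles. -/
theorem timed_fairness_strict_partial_order (ι R : Type*)
    (H : Finset ι) (hH : H.Nonempty) (a : ι → R → ℝ) :
    (∀ r : R, ¬ ∃ τ : ℝ, (∀ h ∈ H, a h r < τ) ∧ (∀ h ∈ H, τ ≤ a h r)) ∧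
    (∀ r₁ r₂ r₃ : R,
      (∃ τ : ℝ, (∀ h ∈ H, a h r₁ < τ) ∧ (∀ h ∈ H, τ ≤ a h r₂)) →
      (∃ τ : ℝ, (∀ h ∈ H, a h r₂ < τ) ∧ (∀ h ∈ H, τ ≤ a h r₃)) →
      (∃ τ : ℝ, (∀ h ∈ H, a h r₁ < τ) ∧ (∀ h ∈ H, τ ≤ a h r₃))) ∧
    (∀ (k : ℕ) (g : Fin (k + 1) → R),
      ¬ ((∀ i : Fin k,
            ∃ τ : ℝ, (∀ h ∈ H, a h (g i.castSucc) < τ) ∧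
              (∀ h ∈ H, τ ≤ a h (g i.succ))) ∧
         (∃ τ : ℝ, (∀ h ∈ H, a h (g (Fin.last k)) < τ) ∧
            (∀ h ∈ H, τ ≤ a h (g 0))))) := by
  obtain ⟨h₀, hh₀⟩ := hH
  refine ⟨?_, ?_, ?_⟩
  · rintro r ⟨τ, h1, h2⟩
    exact absurd (h2 h₀ hh₀) (not_le.mpr (h1 h₀ hh₀))
  · rintro r₁ r₂ r₃ ⟨τ₁, h1, h2⟩ ⟨τ₂, h3, h4⟩
    exact ⟨τ₂, fun h hh => lt_trans (lt_of_lt_of_le (h1 h hh) (h2 h hh)) (h3 h hh), h4⟩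
  · rintro k g ⟨hchain, τ, hlast1, hlast2⟩
    have step : ∀ i : Fin k, a h₀ (g i.castSucc) < a h₀ (g i.succ) := by
      intro i
      obtain ⟨τ, h1, h2⟩ := hchain i
      exact lt_of_lt_of_le (h1 h₀ hh₀) (h2 h₀ hh₀)
    have mono : ∀ i : Fin (k + 1), a h₀ (g 0) ≤ a h₀ (g i) := by
      intro i
      induction i using Fin.induction with
      | zero => exact le_refl _
      | succ j ih => exact le_of_lt (lt_of_le_of_lt ih (step j))
    exact absurd (mono (Fin.last k)) (not_le.mpr (lt_of_lt_of_le (hlast1 h₀ hh₀) (hlast2 h₀ hh₀)))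
end

section
/- Let n = 3t+1 and let m be the median of a multiset of n−t real timestamps for request r. If at least t+1 of the n parties gave request r' a timestamp smaller than m, and at most t parties are corrupt, then at least one honest party timestamped r' before the honest median position of r's timestamps; conversely, if at most t parties gave r' a timestamp smaller than m, then it is impossible that all honest parties saw r' before all honest parties saw r relative to a common threshold τ ≤ m. -/
open Finset

/-- Clocked-Wendy leader rule around the median m of r's timestamps: if ≥ t+1 parties
timestamp r' below m, some honest party did; if ≤ t parties timestamp r' below m, there
is no threshold τ with all honest parties seeing r' before τ and r at or after τ. -/
theorem clocked_wendy_median_rule (t : ℕ)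
    (τr τr' : Fin (3 * t + 1) → ℝ) (C : Finset (Fin (3 * t + 1)))
    (hC : C.card ≤ t) (m : ℝ)
    (hm : t + 1 ≤ (univ.filter fun i => τr i ≤ m).card) :
    (t + 1 ≤ (univ.filter fun i => τr' i < m).card →
        ∃ i, i ∉ C ∧ τr' i < m) ∧
    ((univ.filter fun i => τr' i < m).card ≤ t →
        ¬ ∃ τ : ℝ, (∀ i, i ∉ C → τr' i < τ) ∧ (∀ i, i ∉ C → τ ≤ τr i)) := by
  constructor
  · intro h
    have : ¬ (univ.filter fun i => τr' i < m) ⊆ C := by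
      intro hsub
      have := card_le_card hsub
      omega
    obtain ⟨i, hi, hic⟩ := not_subset.mp this
    exact ⟨i, hic, (mem_filter.mp hi).2⟩
  · intro h ⟨τ, h1, h2⟩
    -- find honest i with τr i ≤ m
    have : ¬ (univ.filter fun i => τr i ≤ m) ⊆ C := by
      intro hsub
      have := card_le_card hsub
      omega
    obtain ⟨i, hi, hic⟩ := not_subset.mp this
    have hτm : τ ≤ m := le_trans (h2 i hic) (mem_filter.mp hi).2
    -- all honest parties in the filter
    have hsub : univ \ C ⊆ (univ.filter fun j => τr' j < m) := by
      intro j hj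
      rw [mem_sdiff] at hj
      exact mem_filter.mpr ⟨mem_univ j, lt_of_lt_of_le (h1 j hj.2) hτm⟩
    have hc := card_le_card hsub
    rw [card_sdiff_of_subset (subset_univ C), card_univ, Fintype.card_fin] at hc
    omega
end

section
/- Suppose blocks are produced so that (a) undelivered requests are carried to the next instance preserving order, (b) each terminating instance delivers a nonempty block, and (c) for each request r seen by all honest parties, the set of requests that relative fairness permits to be scheduled in a strictly earlier block than r is finite, of size K_r. Then r is delivered in one of the first K_r + 1 blocks. -/
/-- If blocks are nonempty and pairwise disjoint, and every block delivered strictly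
before the block containing r consists only of requests from a finite set S of size
K_r, then r is delivered in one of the first K_r + 1 blocks. -/
theorem fairness_implies_bounded_delivery (R : Type*) [DecidableEq R]
    (B : ℕ → Finset R)
    (hne : ∀ i, (B i).Nonempty)
    (hdisj : ∀ i j, i ≠ j → Disjoint (B i) (B j))
    (r : R) (N : ℕ) (hr : r ∈ B N)
    (S : Finset R) (hS : ∀ i < N, ∀ x ∈ B i, x ∈ S) :
    N < S.card + 1 := by
  have key : N ≤ S.card := by
    have : (Finset.range N).card ≤ S.card := by
      apply Finset.card_le_card_of_injOn (fun i => (hne i).choose)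
      · intro i hi
        exact hS i (Finset.mem_range.mp hi) _ (hne i).choose_spec
      · intro i hi j hj hij
        by_contra h
        have h1 := (hne i).choose_spec
        have h2 := (hne j).choose_spec
        rw [show (hne i).choose = (hne j).choose from hij] at h1
        exact Finset.disjoint_left.mp (hdisj i j h) h1 h2
    simpa using this
  omega
end
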